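/- Let 𝒯 be a k-linear Hom-finite category with weak kernels and weak cokernels, T ∈ 𝒯 with Γ = End_𝒯(T), and suppose 𝒯 has a Serre functor. Then the essential image 𝒟 of the functor 𝒯(T,−) : 𝒯 → mod Γ is a functorially finite subcategory of mod Γ. -/

import Mathlib

noncomputable section
open CategoryTheory CategoryTheory.Limits

/-- `Ext^i_R(A,B)` vanishes. -/
def ExtVanish (R : Type) [Ring R] (A B : ModuleCat R) (i : ℕ) : Prop :=
  Subsingleton (((Ext ℤ (ModuleCat R) i).obj (Opposite.op A)).obj B)

variable (k : Type) [Field k]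
variable (𝒯 : Type) [Category.{0} 𝒯] [Preadditive 𝒯]

/-- The category is Hom-finite over `k`. -/
def HomFinite [CategoryTheory.Linear k 𝒯] : Prop :=
  ∀ X Y : 𝒯, FiniteDimensional k (X ⟶ Y)

/-- The right `End T`-module structure (by precomposition) on `T ⟶ X`. -/
instance endOppositeModule (T X : 𝒯) : Module (End T)ᵐᵒᵖ (T ⟶ X) where
  smul m a := m.unop ≫ a
  one_smul a := Category.id_comp a
  mul_smul m n a := by
    show (n.unop * m.unop) ≫ a = m.unop ≫ n.unop ≫ a
    show (m.unop ≫ n.unop) ≫ a = _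
    simp
  smul_zero m := Limits.comp_zero
  smul_add m a b := Preadditive.comp_add _ _ _ _ _ _
  add_smul m n a := Preadditive.add_comp _ _ _ _ _ _
  zero_smul a := Limits.zero_comp

/-- The `Γ`-linear map `𝒯(T,X) → 𝒯(T,Y)` induced by postcomposition with `f : X ⟶ Y`. -/
def postcompHom (T : 𝒯) {X Y : 𝒯} (f : X ⟶ Y) :
    (T ⟶ X) →ₗ[(End T)ᵐᵒᵖ] (T ⟶ Y) where
  toFun a := a ≫ f
  map_add' a b := Preadditive.add_comp _ _ _ _ _ _
  map_smul' m a := by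
    show (m.unop ≫ a) ≫ f = m.unop ≫ (a ≫ f)
    simp

/-- The image of `X` under the functor `𝒯(T,-) : 𝒯 → Mod (End T)ᵐᵒᵖ`. -/
def homMod (T X : 𝒯) : ModuleCat (End T)ᵐᵒᵖ := ModuleCat.of _ (T ⟶ X)

/-- Membership in `add T`: direct summand of a finite direct sum of copies of `T`. -/
def InAdd [HasFiniteBiproducts 𝒯] (T X : 𝒯) : Prop :=
  ∃ (n : ℕ) (s : X ⟶ biproduct (fun _ : Fin n => T))
    (r : biproduct (fun _ : Fin n => T) ⟶ X), s ≫ r = 𝟙 X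

/-- `X` is indecomposable. -/
def Indecomposable' (X : 𝒯) : Prop :=
  ¬ Limits.IsZero X ∧ ∀ e : X ⟶ X, e ≫ e = e → e = 0 ∨ e = 𝟙 X

/-- The functor `𝒯(T,-)` is full onto `Γ`-linear maps. -/
def HomFunctorFull (T : 𝒯) : Prop :=
  ∀ (X Y : 𝒯) (φ : (T ⟶ X) →ₗ[(End T)ᵐᵒᵖ] (T ⟶ Y)), ∃ g : X ⟶ Y, ∀ a, φ a = a ≫ g

/-- The essential image of `𝒯(T,-)` in `mod (End T)ᵐᵒᵖ`. -/
def EssIm (T : 𝒯) : Set (ModuleCat (End T)ᵐᵒᵖ) :=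
  {M | ∃ X : 𝒯, Nonempty (M ≅ homMod 𝒯 T X)}

/-- A Serre functor: an autoequivalence `S` with binatural isomorphisms
`𝒯(Y, SX) ≅ D 𝒯(X,Y)`. -/
structure SerreData [CategoryTheory.Linear k 𝒯] where
  S : 𝒯 ⥤ 𝒯
  equiv : S.IsEquivalence
  ε : ∀ X Y : 𝒯, (Y ⟶ S.obj X) ≃ₗ[k] Module.Dual k (X ⟶ Y)
  nat_left : ∀ {X Y Y' : 𝒯} (g : Y ⟶ Y') (h : Y' ⟶ S.obj X) (f : X ⟶ Y),
    ε X Y (g ≫ h) f = ε X Y' h (f ≫ g)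
  nat_right : ∀ {X X' Y : 𝒯} (u : X ⟶ X') (h : Y ⟶ S.obj X) (f : X' ⟶ Y),
    ε X' Y (h ≫ S.map u) f = ε X Y h (u ≫ f)

/-- A candidate `(d+2)`-angle `X₀ → X₁ → ⋯ → X_{d+1} → Σᵈ X₀`. -/
structure Candidate (Sd : 𝒯 ⥤ 𝒯) (d : ℕ) where
  obj : ℕ → 𝒯
  hom : ∀ n, obj n ⟶ obj (n + 1)
  conn : obj (d + 1) ⟶ Sd.obj (obj 0)

/-- A `(d+2)`-angulated structure on `𝒯`: an auto-equivalence `Σᵈ` together with a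
class of `(d+2)`-angles satisfying (part of) the Geiss–Keller–Oppermann axioms. -/
structure Angulation (d : ℕ) where
  shift : 𝒯 ⥤ 𝒯
  equiv : shift.IsEquivalence
  IsAngle : Candidate 𝒯 shift d → Prop
  comp_zero : ∀ C, IsAngle C → ∀ n, n + 1 ≤ d → C.hom n ≫ C.hom (n + 1) = 0
  conn_zero : ∀ C, IsAngle C → C.hom d ≫ C.conn = 0
  exists_angle : ∀ {A B : 𝒯} (f : A ⟶ B), ∃ C, IsAngle C ∧
    ∃ (eA : C.obj 0 ≅ A) (eB : C.obj 1 ≅ B), C.hom 0 = eA.hom ≫ f ≫ eB.inv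
  hom_exact : ∀ C, IsAngle C → ∀ (W : 𝒯) (n : ℕ), n + 1 ≤ d →
    Function.Exact (fun a : W ⟶ C.obj n => a ≫ C.hom n)
      (fun a : W ⟶ C.obj (n + 1) => a ≫ C.hom (n + 1))
  hom_exact_last : ∀ C, IsAngle C → ∀ W : 𝒯,
    Function.Exact (fun a : W ⟶ C.obj d => a ≫ C.hom d)
      (fun a : W ⟶ C.obj (d + 1) => a ≫ C.conn)

/-- Condition (b) of the paper. -/
def CondB [HasFiniteBiproducts 𝒯] {d : ℕ} (A : Angulation 𝒯 d) (T : 𝒯) : Prop :=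
  ∀ X : 𝒯, Indecomposable' 𝒯 X → (∃ a : T ⟶ X, a ≠ 0) →
    ∃ C, A.IsAngle C ∧ (∀ i, i ≤ d → InAdd 𝒯 T (C.obj i)) ∧
      Nonempty (C.obj (d + 1) ≅ X) ∧ ∀ a : T ⟶ C.obj (d + 1), a ≫ C.conn = 0

section BasicAux
set_option linter.unusedSectionVars false

variable {𝒯 : Type} [Category.{0} 𝒯] [Preadditive 𝒯]

lemma hom_smul_def {T X : 𝒯} (m : (End T)ᵐᵒᵖ) (a : T ⟶ X) : m • a = m.unop ≫ a := rfl

lemma op_smul_hom {T X : 𝒯} (t : T ⟶ T) (a : T ⟶ X) :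
    (MulOpposite.op t : (End T)ᵐᵒᵖ) • a = t ≫ a := rfl

lemma op_mul_op {T : 𝒯} (s t : T ⟶ T) :
    ((MulOpposite.op s : (End T)ᵐᵒᵖ) * (MulOpposite.op t : (End T)ᵐᵒᵖ))
      = MulOpposite.op (s ≫ t) := rfl

end BasicAux

/-- The canonical ring map `k →+* (End T)ᵐᵒᵖ`. -/
def toGamma {𝒯 : Type} [Category.{0} 𝒯] [Preadditive 𝒯] (k : Type) [Field k]
    [CategoryTheory.Linear k 𝒯] (T : 𝒯) : k →+* (End T)ᵐᵒᵖ where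
  toFun c := MulOpposite.op (c • 𝟙 T)
  map_one' := by
    show MulOpposite.op (((1 : k)) • 𝟙 T) = (1 : (End T)ᵐᵒᵖ)
    rw [one_smul]; rfl
  map_mul' c d := by
    show MulOpposite.op (((c * d) : k) • 𝟙 T) =
      (MulOpposite.op (c • 𝟙 T) : (End T)ᵐᵒᵖ) * (MulOpposite.op (d • 𝟙 T) : (End T)ᵐᵒᵖ)
    rw [op_mul_op]
    congr 1
    rw [CategoryTheory.Linear.smul_comp, Category.id_comp, smul_smul]
  map_zero' := by
    show MulOpposite.op (((0 : k)) • 𝟙 T) = (0 : (End T)ᵐᵒᵖ)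
    rw [zero_smul]; rfl
  map_add' c d := by
    show MulOpposite.op (((c + d) : k) • 𝟙 T) =
      (MulOpposite.op (c • 𝟙 T) : (End T)ᵐᵒᵖ) + (MulOpposite.op (d • 𝟙 T) : (End T)ᵐᵒᵖ)
    rw [add_smul]; rfl

section LinearAux
set_option linter.unusedSectionVars false

variable {k : Type} [Field k]
variable {𝒯 : Type} [Category.{0} 𝒯] [Preadditive 𝒯] [CategoryTheory.Linear k 𝒯]

lemma ksmul_hom (k : Type) [Field k] [CategoryTheory.Linear k 𝒯] {T X : 𝒯} (c : k) (a : T ⟶ X) :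
    (c : k) • a = (MulOpposite.op (c • 𝟙 T) : (End T)ᵐᵒᵖ) • a := by
  rw [op_smul_hom, CategoryTheory.Linear.smul_comp, Category.id_comp]

lemma ksmul_commute {T : 𝒯} {M : Type*} [AddCommGroup M] [Module (End T)ᵐᵒᵖ M] [Module k M]
    (hks : ∀ (c : k) (x : M), c • x = ((toGamma k T) c) • x)
    (c : k) (t : T ⟶ T) (x : M) :
    (MulOpposite.op (c • t) : (End T)ᵐᵒᵖ) • x = c • ((MulOpposite.op t : (End T)ᵐᵒᵖ) • x) := by
  rw [hks, ← mul_smul]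
  congr 1
  show MulOpposite.op (c • t) =
    (MulOpposite.op (c • 𝟙 T) : (End T)ᵐᵒᵖ) * (MulOpposite.op t : (End T)ᵐᵒᵖ)
  rw [op_mul_op]
  congr 1
  rw [CategoryTheory.Linear.smul_comp, Category.id_comp]

lemma gamma_ksmul_comm {T : 𝒯} {M : Type*} [AddCommGroup M] [Module (End T)ᵐᵒᵖ M] [Module k M]
    (hks : ∀ (c : k) (x : M), c • x = ((toGamma k T) c) • x)
    (γ : (End T)ᵐᵒᵖ) (c : k) (x : M) : γ • (c • x) = c • (γ • x) := by
  rw [hks, hks, ← mul_smul, ← mul_smul]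
  congr 1
  show γ * (MulOpposite.op (c • 𝟙 T) : (End T)ᵐᵒᵖ) =
    (MulOpposite.op (c • 𝟙 T) : (End T)ᵐᵒᵖ) * γ
  conv_lhs => rw [← MulOpposite.op_unop γ]
  conv_rhs => rw [← MulOpposite.op_unop γ]
  rw [op_mul_op, op_mul_op]
  congr 1
  simp [CategoryTheory.Linear.smul_comp, CategoryTheory.Linear.comp_smul]

end LinearAux

section BiprodAux
set_option linter.unusedSectionVars false

variable {𝒯 : Type} [Category.{0} 𝒯] [Preadditive 𝒯] [HasFiniteBiproducts 𝒯]

/-- Decomposition of a map into a biproduct of copies of `T`. -/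
lemma hom_into_biproduct {T Y : 𝒯} {n : ℕ} (a : Y ⟶ ⨁ (fun _ : Fin n => T)) :
    a = ∑ j, (a ≫ biproduct.π (fun _ : Fin n => T) j) ≫ biproduct.ι (fun _ : Fin n => T) j := by
  calc a = a ≫ 𝟙 _ := (Category.comp_id a).symm
  _ = a ≫ ∑ j, biproduct.π (fun _ : Fin n => T) j ≫ biproduct.ι (fun _ : Fin n => T) j := by
        rw [biproduct.total]
  _ = _ := by rw [Preadditive.comp_sum]; simp [Category.assoc]

lemma hom_out_of_biproduct {T X : 𝒯} {p : ℕ} (b : (⨁ fun _ : Fin p => T) ⟶ X) :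
    b = ∑ i, biproduct.π (fun _ : Fin p => T) i ≫ (biproduct.ι (fun _ : Fin p => T) i ≫ b) := by
  calc b = 𝟙 _ ≫ b := (Category.id_comp b).symm
  _ = (∑ i, biproduct.π (fun _ : Fin p => T) i ≫ biproduct.ι (fun _ : Fin p => T) i) ≫ b := by
        rw [biproduct.total]
  _ = _ := by rw [Preadditive.sum_comp]; simp [Category.assoc]

/-- `𝒯(T,-)` is full on maps out of finite direct sums of copies of `T`. -/
lemma free_cov {T Y : 𝒯} {n : ℕ}
    (χ : (T ⟶ (⨁ fun _ : Fin n => T)) →ₗ[(End T)ᵐᵒᵖ] (T ⟶ Y)) :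
    ∃ h₀ : (⨁ fun _ : Fin n => T) ⟶ Y, ∀ a, χ a = a ≫ h₀ := by
  refine ⟨biproduct.desc fun i => χ (biproduct.ι (fun _ : Fin n => T) i), fun a => ?_⟩
  conv_lhs => rw [hom_into_biproduct a]
  conv_rhs => rw [hom_into_biproduct a]
  rw [map_sum, Preadditive.sum_comp]
  refine Finset.sum_congr rfl fun j _ => ?_
  have hsm : ((a ≫ biproduct.π (fun _ : Fin n => T) j) ≫ biproduct.ι (fun _ : Fin n => T) j) =
      (MulOpposite.op (a ≫ biproduct.π (fun _ : Fin n => T) j) : (End T)ᵐᵒᵖ) •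
        biproduct.ι (fun _ : Fin n => T) j := rfl
  rw [hsm, LinearMap.map_smul]
  show _ ≫ χ (biproduct.ι (fun _ : Fin n => T) j) = (_ ≫ biproduct.ι (fun _ : Fin n => T) j) ≫
      biproduct.desc fun i => χ (biproduct.ι (fun _ : Fin n => T) i)
  rw [Category.assoc, biproduct.ι_desc]

/-- Comparison maps for the image of a biproduct under an additive functor. -/
lemma theta_inv {T : 𝒯} (S : 𝒯 ⥤ 𝒯) [S.Additive] (n : ℕ) :
    (biproduct.lift fun i => S.map (biproduct.π (fun _ : Fin n => T) i)) ≫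
      (biproduct.desc fun i => S.map (biproduct.ι (fun _ : Fin n => T) i)) = 𝟙 _ ∧
    (biproduct.desc fun i => S.map (biproduct.ι (fun _ : Fin n => T) i)) ≫
      (biproduct.lift fun i => S.map (biproduct.π (fun _ : Fin n => T) i)) = 𝟙 _ := by
  constructor
  · rw [biproduct.lift_desc]
    have he : ∀ j : Fin n, S.map (biproduct.π (fun _ : Fin n => T) j) ≫
        S.map (biproduct.ι (fun _ : Fin n => T) j) =
        S.map (biproduct.π (fun _ : Fin n => T) j ≫ biproduct.ι (fun _ : Fin n => T) j) :=
      fun j => (S.map_comp _ _).symm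
    rw [Finset.sum_congr rfl fun j _ => he j, ← S.map_sum, biproduct.total, S.map_id]
  · apply biproduct.hom_ext'
    intro i
    apply biproduct.hom_ext
    intro j
    simp only [Category.assoc, biproduct.ι_desc_assoc, biproduct.lift_π, Category.comp_id,
      Category.id_comp]
    rw [← S.map_comp, biproduct.ι_π, biproduct.ι_π]
    by_cases h : i = j
    · subst h
      simp
    · simp [h]

end BiprodAux
section LeftApprox
set_option linter.unusedSectionVars false
set_option maxHeartbeats 1000000

variable {k : Type} [Field k]
variable {𝒯 : Type} [Category.{0} 𝒯] [Preadditive 𝒯] [CategoryTheory.Linear k 𝒯]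
variable [HasFiniteBiproducts 𝒯]

lemma left_approx {T : 𝒯} (hfin : HomFinite k 𝒯)
    (hwcok : ∀ {A B : 𝒯} (f : A ⟶ B), ∃ (C : 𝒯) (g : B ⟶ C), f ≫ g = 0 ∧
      ∀ (Y : 𝒯) (h : B ⟶ Y), f ≫ h = 0 → ∃ u : C ⟶ Y, h = g ≫ u)
    (M : ModuleCat (End T)ᵐᵒᵖ) (hM : Module.Finite (End T)ᵐᵒᵖ M) :
    ∃ A ∈ EssIm 𝒯 T, ∃ f : M ⟶ A, ∀ B ∈ EssIm 𝒯 T, ∀ g : M ⟶ B, ∃ h : A ⟶ B, f ≫ h = g := by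
  classical
  obtain ⟨n, m, hm⟩ := Module.Finite.exists_fin (R := (End T)ᵐᵒᵖ) (M := M)
  set Tn := ⨁ (fun _ : Fin n => T) with hTn
  let π : (T ⟶ Tn) →ₗ[(End T)ᵐᵒᵖ] M :=
    { toFun := fun a => ∑ i, (MulOpposite.op (a ≫ biproduct.π (fun _ : Fin n => T) i) :
        (End T)ᵐᵒᵖ) • m i
      map_add' := by
        intro a b
        rw [← Finset.sum_add_distrib]
        refine Finset.sum_congr rfl fun i _ => ?_
        have : (MulOpposite.op ((a + b) ≫ biproduct.π (fun _ : Fin n => T) i) : (End T)ᵐᵒᵖ)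
            = (MulOpposite.op (a ≫ biproduct.π (fun _ : Fin n => T) i) : (End T)ᵐᵒᵖ)
              + (MulOpposite.op (b ≫ biproduct.π (fun _ : Fin n => T) i) : (End T)ᵐᵒᵖ) := by
          rw [Preadditive.add_comp]; rfl
        rw [this, add_smul]
      map_smul' := by
        intro γ a
        dsimp only [RingHom.id_apply]
        rw [Finset.smul_sum]
        refine Finset.sum_congr rfl fun i _ => ?_
        rw [← mul_smul]
        congr 1
        show MulOpposite.op ((γ.unop ≫ a) ≫ biproduct.π (fun _ : Fin n => T) i) = _
        rw [Category.assoc]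
        exact (op_mul_op γ.unop (a ≫ biproduct.π (fun _ : Fin n => T) i)).symm ▸
          (congrArg MulOpposite.op rfl) }
  have hπι : ∀ i, π (biproduct.ι (fun _ : Fin n => T) i) = m i := by
    intro i
    show (∑ j, (MulOpposite.op (biproduct.ι (fun _ : Fin n => T) i ≫
      biproduct.π (fun _ : Fin n => T) j) : (End T)ᵐᵒᵖ) • m j) = m i
    rw [Finset.sum_eq_single i]
    · have : (MulOpposite.op (biproduct.ι (fun _ : Fin n => T) i ≫
          biproduct.π (fun _ : Fin n => T) i) : (End T)ᵐᵒᵖ) = 1 := by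
        rw [biproduct.ι_π_self]; rfl
      rw [this, one_smul]
    · intro j _ hji
      have : (MulOpposite.op (biproduct.ι (fun _ : Fin n => T) i ≫
          biproduct.π (fun _ : Fin n => T) j) : (End T)ᵐᵒᵖ) = 0 := by
        rw [biproduct.ι_π_ne _ hji.symm]; rfl
      rw [this, zero_smul]
    · intro h; exact absurd (Finset.mem_univ i) h
  have hπsurj : Function.Surjective π := by
    intro x
    have hx : x ∈ Submodule.span (End T)ᵐᵒᵖ (Set.range m) := by rw [hm]; trivial
    have hle : Submodule.span (End T)ᵐᵒᵖ (Set.range m) ≤ LinearMap.range π := by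
      rw [Submodule.span_le]
      rintro _ ⟨i, rfl⟩
      exact ⟨biproduct.ι (fun _ : Fin n => T) i, hπι i⟩
    exact hle hx
  have hfinTn : FiniteDimensional k (T ⟶ Tn) := hfin T Tn
  let K' : Submodule k (T ⟶ Tn) :=
    { carrier := LinearMap.ker π
      add_mem' := fun ha hb => (LinearMap.ker π).add_mem ha hb
      zero_mem' := (LinearMap.ker π).zero_mem
      smul_mem' := fun c x hx => by
        show (c • x) ∈ LinearMap.ker π
        rw [ksmul_hom k c x]
        exact (LinearMap.ker π).smul_mem _ hx }
  obtain ⟨p, y', hy'⟩ := Module.Finite.exists_fin (R := k) (M := K')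
  let y : Fin p → (T ⟶ Tn) := fun i => (y' i : T ⟶ Tn)
  have hyK : ∀ i, y i ∈ LinearMap.ker π := fun i => (y' i).2
  have hKspan : ∀ x, x ∈ LinearMap.ker π →
      x ∈ Submodule.span (End T)ᵐᵒᵖ (Set.range y) := by
    intro x hx
    have h2 : (⟨x, hx⟩ : K') ∈ (⊤ : Submodule k K') := trivial
    rw [← hy'] at h2
    obtain ⟨c, hc⟩ := (Submodule.mem_span_range_iff_exists_fun k).mp h2
    have hc' : x = ∑ i, c i • y i := by
      have := congrArg (K'.subtype) hc
      simp only [map_sum, map_smul] at this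
      exact this.symm
    rw [hc']
    refine Submodule.sum_mem _ fun i _ => ?_
    rw [ksmul_hom k]
    exact Submodule.smul_mem _ _ (Submodule.subset_span ⟨i, rfl⟩)
  obtain ⟨C, g, hg0, hgfact⟩ := hwcok (biproduct.desc y)
  have hKg : ∀ x ∈ LinearMap.ker π, x ≫ g = 0 := by
    intro x hx
    refine Submodule.span_induction ?_ ?_ ?_ ?_ (hKspan x hx)
    · rintro z ⟨i, rfl⟩
      have h3 : y i = biproduct.ι (fun _ : Fin p => T) i ≫ biproduct.desc y :=
        (biproduct.ι_desc _ _).symm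
      rw [h3, Category.assoc, hg0, Limits.comp_zero]
    · exact Limits.zero_comp
    · intro a b _ _ ha hb; rw [Preadditive.add_comp, ha, hb, add_zero]
    · intro γ a _ ha; rw [hom_smul_def, Category.assoc, ha, Limits.comp_zero]
  let ψ : (T ⟶ Tn) →ₗ[(End T)ᵐᵒᵖ] (T ⟶ C) := postcompHom 𝒯 T g
  have hKψ : LinearMap.ker π ≤ LinearMap.ker ψ := by
    intro x hx
    exact LinearMap.mem_ker.mpr (hKg x hx)
  let pbar := (LinearMap.ker π).liftQ π (le_refl _)
  have hpbar_bij : Function.Bijective pbar := by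
    constructor
    · rw [← LinearMap.ker_eq_bot]
      exact Submodule.ker_liftQ_eq_bot _ _ _ (le_refl _)
    · intro mm
      obtain ⟨x, rfl⟩ := hπsurj mm
      exact ⟨Submodule.Quotient.mk x, Submodule.liftQ_apply _ (h := le_refl _) π x⟩
  let e := LinearEquiv.ofBijective pbar hpbar_bij
  let fbar := (LinearMap.ker π).liftQ ψ hKψ
  let f0 : M →ₗ[(End T)ᵐᵒᵖ] (T ⟶ C) := fbar.comp (e.symm : M →ₗ[(End T)ᵐᵒᵖ] _)
  have hf0 : ∀ x : (T ⟶ Tn), f0 (π x) = x ≫ g := by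
    intro x
    have he : e (Submodule.Quotient.mk x) = π x := Submodule.liftQ_apply _ (h := le_refl _) π x
    have he2 : e.symm (π x) = Submodule.Quotient.mk x := by
      rw [← he, LinearEquiv.symm_apply_apply]
    show fbar (e.symm (π x)) = x ≫ g
    rw [he2]
    exact Submodule.liftQ_apply _ (h := hKψ) ψ x
  refine ⟨homMod 𝒯 T C, ⟨C, ⟨Iso.refl _⟩⟩, ModuleCat.ofHom f0, ?_⟩
  intro B hB g'
  obtain ⟨Y, ⟨eB⟩⟩ := hB
  let χ : (T ⟶ Tn) →ₗ[(End T)ᵐᵒᵖ] (T ⟶ Y) := LinearMap.comp (g' ≫ eB.hom).hom π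
  obtain ⟨h₀, hh₀⟩ := free_cov χ
  have hχker : ∀ i, χ (y i) = 0 := by
    intro i
    show (g' ≫ eB.hom).hom (π (y i)) = 0
    rw [LinearMap.mem_ker.mp (hyK i)]
    exact map_zero _
  have hφh₀ : biproduct.desc y ≫ h₀ = 0 := by
    apply biproduct.hom_ext'
    intro i
    rw [← Category.assoc, biproduct.ι_desc, ← hh₀, hχker, Limits.comp_zero]
  obtain ⟨u, hu⟩ := hgfact Y h₀ hφh₀
  refine ⟨ModuleCat.ofHom (postcompHom 𝒯 T u) ≫ eB.inv, ?_⟩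
  apply ModuleCat.hom_ext
  apply LinearMap.ext
  intro mm
  obtain ⟨x, rfl⟩ := hπsurj mm
  show eB.inv.hom (postcompHom 𝒯 T u (f0 (π x))) = g'.hom (π x)
  rw [hf0]
  have h1 : postcompHom 𝒯 T u (x ≫ g) = χ x := by
    show (x ≫ g) ≫ u = χ x
    rw [Category.assoc, ← hu, hh₀]
  rw [h1]
  show (eB.hom ≫ eB.inv).hom (g'.hom (π x)) = g'.hom (π x)
  rw [eB.hom_inv_id]
  rfl

end LeftApprox
section RightAux
set_option linter.unusedSectionVars false
set_option maxHeartbeats 1000000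

variable {k : Type} [Field k]
variable {𝒯 : Type} [Category.{0} 𝒯] [Preadditive 𝒯] [CategoryTheory.Linear k 𝒯]
variable [HasFiniteBiproducts 𝒯]

/-- A Serre functor is additive. -/
lemma serre_additive (SD : SerreData k 𝒯) : SD.S.Additive := by
  constructor
  intro X Y f g
  have key : ∀ (u : X ⟶ Y) (b : Y ⟶ SD.S.obj X),
      SD.ε Y (SD.S.obj X) (SD.S.map u) b = SD.ε X (SD.S.obj X) (𝟙 _) (u ≫ b) := by
    intro u b
    have := SD.nat_right u (𝟙 (SD.S.obj X)) b
    rwa [Category.id_comp] at this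
  apply (SD.ε Y (SD.S.obj X)).injective
  apply LinearMap.ext
  intro b
  rw [map_add, LinearMap.add_apply, key (f + g) b, key f b, key g b, Preadditive.add_comp,
    map_add]

/-- `𝒯(T,X)` is a finite module over the opposite endomorphism ring. -/
lemma moduleFinite_hom {T X : 𝒯} (hfin : HomFinite k 𝒯) :
    Module.Finite (End T)ᵐᵒᵖ (T ⟶ X) := by
  haveI : FiniteDimensional k (T ⟶ X) := hfin T X
  obtain ⟨r, s, hs⟩ := Module.Finite.exists_fin (R := k) (M := (T ⟶ X))
  have hspan : Submodule.span (End T)ᵐᵒᵖ (Set.range s) = ⊤ := by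
    rw [eq_top_iff]
    intro x _
    have hx : x ∈ Submodule.span k (Set.range s) := by rw [hs]; trivial
    refine Submodule.span_induction ?_ ?_ ?_ ?_ hx
    · exact fun z hz => Submodule.subset_span hz
    · exact Submodule.zero_mem _
    · exact fun a b _ _ ha hb => Submodule.add_mem _ ha hb
    · intro c a _ ha
      rw [ksmul_hom k]
      exact Submodule.smul_mem _ _ ha
  exact ⟨by rw [← hspan]; exact Submodule.fg_span (Set.finite_range s)⟩

lemma fd_of_modfinite {T : 𝒯} (hfin : HomFinite k 𝒯) (M : Type*) [AddCommGroup M]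
    [Module (End T)ᵐᵒᵖ M] [Module k M]
    (hks : ∀ (c : k) (x : M), c • x = ((toGamma k T) c) • x)
    [hM : Module.Finite (End T)ᵐᵒᵖ M] : FiniteDimensional k M := by
  obtain ⟨n, m, hm⟩ := Module.Finite.exists_fin (R := (End T)ᵐᵒᵖ) (M := M)
  haveI : FiniteDimensional k (T ⟶ T) := hfin T T
  obtain ⟨r, s, hs⟩ := Module.Finite.exists_fin (R := k) (M := (T ⟶ T))
  let F : Fin n × Fin r → M := fun q => (MulOpposite.op (s q.2) : (End T)ᵐᵒᵖ) • m q.1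
  have claim0 : ∀ (i : Fin n) (t : T ⟶ T), (MulOpposite.op t : (End T)ᵐᵒᵖ) • m i ∈
      Submodule.span k (Set.range F) := by
    intro i t
    have ht : t ∈ Submodule.span k (Set.range s) := by rw [hs]; trivial
    refine Submodule.span_induction ?_ ?_ ?_ ?_ ht
    · rintro z ⟨jj, rfl⟩; exact Submodule.subset_span ⟨(i, jj), rfl⟩
    · rw [show (MulOpposite.op (0 : T ⟶ T) : (End T)ᵐᵒᵖ) = 0 from rfl, zero_smul]
      exact Submodule.zero_mem _
    · intro a b _ _ ha hb
      rw [show (MulOpposite.op (a + b) : (End T)ᵐᵒᵖ) =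
        MulOpposite.op a + MulOpposite.op b from rfl, add_smul]
      exact Submodule.add_mem _ ha hb
    · intro c a _ ha
      rw [ksmul_commute hks c a (m i)]
      exact Submodule.smul_mem _ _ ha
  have claim1 : ∀ (γ : (End T)ᵐᵒᵖ) (i : Fin n), γ • m i ∈ Submodule.span k (Set.range F) := by
    intro γ i
    have := claim0 i γ.unop
    rwa [MulOpposite.op_unop] at this
  have claim2 : ∀ x : M, x ∈ Submodule.span k (Set.range F) := by
    intro x
    have hx : x ∈ Submodule.span (End T)ᵐᵒᵖ (Set.range m) := by rw [hm]; trivial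
    refine Submodule.span_induction ?_ ?_ ?_ ?_ hx
    · rintro z ⟨i, rfl⟩
      have := claim1 1 i; rwa [one_smul] at this
    · exact Submodule.zero_mem _
    · exact fun a b _ _ ha hb => Submodule.add_mem _ ha hb
    · intro γ z _ hz
      refine Submodule.span_induction ?_ ?_ ?_ ?_ hz
      · rintro w ⟨⟨i, jj⟩, rfl⟩
        show γ • ((MulOpposite.op (s jj) : (End T)ᵐᵒᵖ) • m i) ∈ _
        rw [← mul_smul]
        exact claim1 _ i
      · rw [smul_zero]; exact Submodule.zero_mem _
      · intro a b _ _ ha hb; rw [smul_add]; exact Submodule.add_mem _ ha hb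
      · intro c w _ hw
        rw [gamma_ksmul_comm hks γ c w]
        exact Submodule.smul_mem _ _ hw
  have htop : Submodule.span k (Set.range F) = ⊤ := eq_top_iff.mpr fun x _ => claim2 x
  exact ⟨by rw [← htop]; exact Submodule.fg_span (Set.finite_range F)⟩

end RightAux
section EmbedFull
set_option linter.unusedSectionVars false
set_option maxHeartbeats 1000000

variable {k : Type} [Field k]
variable {𝒯 : Type} [Category.{0} 𝒯] [Preadditive 𝒯] [CategoryTheory.Linear k 𝒯]
variable [HasFiniteBiproducts 𝒯]

/-- Every finite module embeds into a module `𝒯(T, S Tⁿ)`. -/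
lemma embed_into_injective {T : 𝒯} (hfin : HomFinite k 𝒯) (SD : SerreData k 𝒯)
    (M : ModuleCat (End T)ᵐᵒᵖ) (hM : Module.Finite (End T)ᵐᵒᵖ M) :
    ∃ (n : ℕ) (j : ↑M →ₗ[(End T)ᵐᵒᵖ] (T ⟶ SD.S.obj (⨁ fun _ : Fin n => T))),
      Function.Injective j := by
  haveI hadd : SD.S.Additive := serre_additive SD
  letI : Module k ↑M := Module.compHom ↑M (toGamma k T)
  have hks : ∀ (c : k) (x : ↑M), c • x = ((toGamma k T) c) • x := fun c x => rfl
  haveI : FiniteDimensional k ↑M := fd_of_modfinite hfin (M := ↑M) hks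
  obtain ⟨nd, ξ, hξ⟩ := Module.Finite.exists_fin (R := k) (M := Module.Dual k ↑M)
  have hsep : ∀ x : ↑M, (∀ i, ξ i x = 0) → x = 0 := by
    intro x hx
    apply (Module.forall_dual_apply_eq_zero_iff k x).mp
    intro φ
    have hφ : φ ∈ Submodule.span k (Set.range ξ) := by rw [hξ]; trivial
    refine Submodule.span_induction ?_ ?_ ?_ ?_ hφ
    · rintro ζ ⟨i, rfl⟩; exact hx i
    · rfl
    · intro f g _ _ hf hg; rw [LinearMap.add_apply, hf, hg, add_zero]
    · intro c f _ hf; rw [LinearMap.smul_apply, hf, smul_zero]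
  let ℓ : Fin nd → ↑M → Module.Dual k (T ⟶ T) := fun i x =>
    { toFun := fun t => ξ i ((MulOpposite.op t : (End T)ᵐᵒᵖ) • x)
      map_add' := fun t s => by
        show ξ i ((MulOpposite.op (t + s) : (End T)ᵐᵒᵖ) • x) =
          ξ i ((MulOpposite.op t : (End T)ᵐᵒᵖ) • x) + ξ i ((MulOpposite.op s : (End T)ᵐᵒᵖ) • x)
        rw [show (MulOpposite.op (t + s) : (End T)ᵐᵒᵖ) =
          MulOpposite.op t + MulOpposite.op s from rfl, add_smul, map_add]
      map_smul' := fun c t => by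
        show ξ i ((MulOpposite.op (c • t) : (End T)ᵐᵒᵖ) • x) =
          c • ξ i ((MulOpposite.op t : (End T)ᵐᵒᵖ) • x)
        rw [ksmul_commute hks c t x, map_smul] }
  let η : Fin nd → ↑M → (T ⟶ SD.S.obj T) := fun i x => (SD.ε T T).symm (ℓ i x)
  have hℓadd : ∀ i (x y : ↑M), ℓ i (x + y) = ℓ i x + ℓ i y := by
    intro i x y
    apply LinearMap.ext; intro t
    show ξ i ((MulOpposite.op t : (End T)ᵐᵒᵖ) • (x + y)) =
      ξ i ((MulOpposite.op t : (End T)ᵐᵒᵖ) • x) + ξ i ((MulOpposite.op t : (End T)ᵐᵒᵖ) • y)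
    rw [smul_add, map_add]
  have hηadd : ∀ i (x y : ↑M), η i (x + y) = η i x + η i y := by
    intro i x y
    show (SD.ε T T).symm (ℓ i (x + y)) = (SD.ε T T).symm (ℓ i x) + (SD.ε T T).symm (ℓ i y)
    rw [hℓadd, map_add]
  have hηsmul : ∀ i (γ : (End T)ᵐᵒᵖ) (x : ↑M), η i (γ • x) = γ.unop ≫ η i x := by
    intro i γ x
    apply (SD.ε T T).injective
    apply LinearMap.ext; intro f
    rw [LinearEquiv.apply_symm_apply, SD.nat_left γ.unop (η i x) f,
      LinearEquiv.apply_symm_apply]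
    show ξ i ((MulOpposite.op f : (End T)ᵐᵒᵖ) • (γ • x)) =
      ξ i ((MulOpposite.op (f ≫ γ.unop) : (End T)ᵐᵒᵖ) • x)
    have hsc : (MulOpposite.op f : (End T)ᵐᵒᵖ) * γ =
        (MulOpposite.op (f ≫ γ.unop) : (End T)ᵐᵒᵖ) := by
      conv_lhs => rw [← MulOpposite.op_unop γ]
      rw [op_mul_op]
    rw [← mul_smul, hsc]
  let θd : (⨁ fun _ : Fin nd => SD.S.obj T) ⟶ SD.S.obj (⨁ fun _ : Fin nd => T) :=
    biproduct.desc fun i => SD.S.map (biproduct.ι (fun _ : Fin nd => T) i)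
  let θl : SD.S.obj (⨁ fun _ : Fin nd => T) ⟶ (⨁ fun _ : Fin nd => SD.S.obj T) :=
    biproduct.lift fun i => SD.S.map (biproduct.π (fun _ : Fin nd => T) i)
  obtain ⟨hθ1, hθ2⟩ := theta_inv (T := T) SD.S nd
  let jmap : ↑M →ₗ[(End T)ᵐᵒᵖ] (T ⟶ SD.S.obj (⨁ fun _ : Fin nd => T)) :=
    { toFun := fun x => biproduct.lift (fun i => η i x) ≫ θd
      map_add' := fun x y => by
        have hl : biproduct.lift (fun i => η i (x + y)) =
            biproduct.lift (fun i => η i x) + biproduct.lift (fun i => η i y) := by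
          apply biproduct.hom_ext; intro i
          rw [biproduct.lift_π, Preadditive.add_comp, biproduct.lift_π, biproduct.lift_π, hηadd]
        show biproduct.lift (fun i => η i (x + y)) ≫ θd =
          biproduct.lift (fun i => η i x) ≫ θd + biproduct.lift (fun i => η i y) ≫ θd
        rw [hl, Preadditive.add_comp]
      map_smul' := fun γ x => by
        have hl : biproduct.lift (fun i => η i (γ • x)) =
            γ.unop ≫ biproduct.lift (fun i => η i x) := by
          apply biproduct.hom_ext; intro i
          rw [biproduct.lift_π, Category.assoc, biproduct.lift_π, hηsmul]
        show biproduct.lift (fun i => η i (γ • x)) ≫ θd =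
          γ.unop ≫ (biproduct.lift (fun i => η i x) ≫ θd)
        rw [hl, Category.assoc] }
  refine ⟨nd, jmap, ?_⟩
  rw [injective_iff_map_eq_zero]
  intro x hx
  have h4 : biproduct.lift (fun i => η i x) = 0 := by
    calc biproduct.lift (fun i => η i x)
        = biproduct.lift (fun i => η i x) ≫ 𝟙 _ := (Category.comp_id _).symm
    _ = biproduct.lift (fun i => η i x) ≫ (θd ≫ θl) := by rw [hθ2]
    _ = (biproduct.lift (fun i => η i x) ≫ θd) ≫ θl := (Category.assoc _ _ _).symm
    _ = (0 : T ⟶ SD.S.obj (⨁ fun _ : Fin nd => T)) ≫ θl := by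
          rw [show biproduct.lift (fun i => η i x) ≫ θd = (0 : T ⟶ _) from hx]
    _ = 0 := Limits.zero_comp
  have h5 : ∀ i, η i x = 0 := by
    intro i
    have h6 := congrArg (fun z => z ≫ biproduct.π (fun _ : Fin nd => SD.S.obj T) i) h4
    simpa only [biproduct.lift_π, Limits.zero_comp] using h6
  have h6 : ∀ i, ℓ i x = 0 := by
    intro i
    apply (SD.ε T T).symm.injective
    rw [map_zero]
    exact h5 i
  apply hsep
  intro i
  have h7 := congrArg (fun Λ => Λ (𝟙 T)) (h6 i)
  have h8 : ξ i ((MulOpposite.op (𝟙 T) : (End T)ᵐᵒᵖ) • x) = 0 := h7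
  rwa [show (MulOpposite.op (𝟙 T) : (End T)ᵐᵒᵖ) = 1 from rfl, one_smul] at h8

/-- Fullness of `𝒯(T,-)` onto maps into `𝒯(T, S T)`. -/
lemma full_one {T X : 𝒯} (SD : SerreData k 𝒯)
    (χ : (T ⟶ X) →ₗ[(End T)ᵐᵒᵖ] (T ⟶ SD.S.obj T)) :
    ∃ v : X ⟶ SD.S.obj T, ∀ a, χ a = a ≫ v := by
  let Λ : Module.Dual k (T ⟶ X) :=
    { toFun := fun c => SD.ε T T (χ c) (𝟙 T)
      map_add' := fun a b => by
        show SD.ε T T (χ (a + b)) (𝟙 T) = SD.ε T T (χ a) (𝟙 T) + SD.ε T T (χ b) (𝟙 T)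
        rw [map_add, map_add, LinearMap.add_apply]
      map_smul' := fun c a => by
        show SD.ε T T (χ (c • a)) (𝟙 T) = c • SD.ε T T (χ a) (𝟙 T)
        have h1 : χ (c • a) = c • χ a := by
          rw [ksmul_hom k c a, χ.map_smul, ← ksmul_hom k]
        rw [h1, map_smul, LinearMap.smul_apply] }
  refine ⟨(SD.ε T X).symm Λ, fun a => ?_⟩
  apply (SD.ε T T).injective
  apply LinearMap.ext; intro t
  rw [SD.nat_left a ((SD.ε T X).symm Λ) t, LinearEquiv.apply_symm_apply]
  show SD.ε T T (χ a) t = SD.ε T T (χ (t ≫ a)) (𝟙 T)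
  have h2 : χ (t ≫ a) = t ≫ χ a := by
    rw [show t ≫ a = (MulOpposite.op t : (End T)ᵐᵒᵖ) • a from rfl, χ.map_smul]
    rfl
  rw [h2, SD.nat_left t (χ a) (𝟙 T), Category.id_comp]

/-- Fullness of `𝒯(T,-)` onto maps into `𝒯(T, S Tⁿ)`. -/
lemma full_n {T X : 𝒯} (SD : SerreData k 𝒯) {n : ℕ}
    (χ : (T ⟶ X) →ₗ[(End T)ᵐᵒᵖ] (T ⟶ SD.S.obj (⨁ fun _ : Fin n => T))) :
    ∃ v : X ⟶ SD.S.obj (⨁ fun _ : Fin n => T), ∀ a, χ a = a ≫ v := by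
  haveI hadd : SD.S.Additive := serre_additive SD
  obtain ⟨hθ1, hθ2⟩ := theta_inv (T := T) SD.S n
  let θd : (⨁ fun _ : Fin n => SD.S.obj T) ⟶ SD.S.obj (⨁ fun _ : Fin n => T) :=
    biproduct.desc fun i => SD.S.map (biproduct.ι (fun _ : Fin n => T) i)
  let θl : SD.S.obj (⨁ fun _ : Fin n => T) ⟶ (⨁ fun _ : Fin n => SD.S.obj T) :=
    biproduct.lift fun i => SD.S.map (biproduct.π (fun _ : Fin n => T) i)
  have hvi : ∀ i : Fin n, ∃ vi : X ⟶ SD.S.obj T, ∀ a,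
      (postcompHom 𝒯 T (θl ≫ biproduct.π (fun _ : Fin n => SD.S.obj T) i)).comp χ a
        = a ≫ vi :=
    fun i => full_one SD ((postcompHom 𝒯 T (θl ≫ biproduct.π _ i)).comp χ)
  choose vi hvi using hvi
  refine ⟨biproduct.lift vi ≫ θd, fun a => ?_⟩
  have hmain : χ a ≫ θl = a ≫ biproduct.lift vi := by
    apply biproduct.hom_ext; intro i
    conv_rhs => rw [Category.assoc, biproduct.lift_π]
    rw [Category.assoc]
    exact hvi i a
  calc χ a = χ a ≫ 𝟙 _ := (Category.comp_id _).symm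
  _ = χ a ≫ (θl ≫ θd) := by rw [hθ1]
  _ = (χ a ≫ θl) ≫ θd := (Category.assoc _ _ _).symm
  _ = (a ≫ biproduct.lift vi) ≫ θd := by rw [hmain]
  _ = a ≫ (biproduct.lift vi ≫ θd) := Category.assoc _ _ _

end EmbedFull
section RightApprox
set_option linter.unusedSectionVars false
set_option maxHeartbeats 1000000

variable {k : Type} [Field k]
variable {𝒯 : Type} [Category.{0} 𝒯] [Preadditive 𝒯] [CategoryTheory.Linear k 𝒯]
variable [HasFiniteBiproducts 𝒯]

lemma right_approx {T : 𝒯} (hfin : HomFinite k 𝒯) (SD : SerreData k 𝒯)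
    (hwker : ∀ {A B : 𝒯} (f : A ⟶ B), ∃ (C : 𝒯) (g : C ⟶ A), g ≫ f = 0 ∧
      ∀ (Y : 𝒯) (h : Y ⟶ A), h ≫ f = 0 → ∃ u : Y ⟶ C, h = u ≫ g)
    (M : ModuleCat (End T)ᵐᵒᵖ) (hM : Module.Finite (End T)ᵐᵒᵖ M) :
    ∃ A ∈ EssIm 𝒯 T, ∃ f : A ⟶ M, ∀ B ∈ EssIm 𝒯 T, ∀ g : B ⟶ M, ∃ h : B ⟶ A, h ≫ f = g := by
  haveI hadd : SD.S.Additive := serre_additive SD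
  haveI := SD.equiv
  obtain ⟨n, j, hj⟩ := embed_into_injective hfin SD M hM
  haveI hfinSTn : Module.Finite (End T)ᵐᵒᵖ (T ⟶ SD.S.obj (⨁ fun _ : Fin n => T)) :=
    moduleFinite_hom hfin
  haveI hQfin : Module.Finite (End T)ᵐᵒᵖ
      ((T ⟶ SD.S.obj (⨁ fun _ : Fin n => T)) ⧸ LinearMap.range j) :=
    Module.Finite.of_surjective (LinearMap.range j).mkQ (Submodule.mkQ_surjective _)
  obtain ⟨p, jQ, hjQ⟩ := embed_into_injective hfin SD
    (ModuleCat.of (End T)ᵐᵒᵖ ((T ⟶ SD.S.obj (⨁ fun _ : Fin n => T)) ⧸ LinearMap.range j)) hQfin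
  let q : (T ⟶ SD.S.obj (⨁ fun _ : Fin n => T)) →ₗ[(End T)ᵐᵒᵖ]
      (T ⟶ SD.S.obj (⨁ fun _ : Fin p => T)) := jQ ∘ₗ (LinearMap.range j).mkQ
  have hkerq : LinearMap.ker q = LinearMap.range j := by
    show LinearMap.ker (jQ ∘ₗ (LinearMap.range j).mkQ) = LinearMap.range j
    rw [LinearMap.ker_comp, LinearMap.ker_eq_bot.mpr hjQ, Submodule.comap_bot,
      Submodule.ker_mkQ]
  obtain ⟨v, hv⟩ := full_n SD q
  have hSh₁ : SD.S.map (SD.S.preimage v) = v := SD.S.map_preimage v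
  obtain ⟨C, w, hw0, hwfact⟩ := hwker (SD.S.preimage v)
  have hrange : ∀ a : T ⟶ SD.S.obj C, a ≫ SD.S.map w ∈ LinearMap.range j := by
    intro a
    rw [← hkerq]
    apply LinearMap.mem_ker.mpr
    rw [hv (a ≫ SD.S.map w)]
    have hwv : SD.S.map w ≫ v = 0 := by
      rw [← hSh₁, ← SD.S.map_comp, hw0, Functor.map_zero]
    rw [Category.assoc, hwv, Limits.comp_zero]
  let ej := LinearEquiv.ofInjective j hj
  let f0 : (T ⟶ SD.S.obj C) →ₗ[(End T)ᵐᵒᵖ] ↑M :=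
    ej.symm.toLinearMap ∘ₗ
      LinearMap.codRestrict (LinearMap.range j) (postcompHom 𝒯 T (SD.S.map w)) hrange
  have hf0 : ∀ a : T ⟶ SD.S.obj C, j (f0 a) = a ≫ SD.S.map w := by
    intro a
    have hz : ∀ z : LinearMap.range j, j (ej.symm z) = z := by
      intro z
      have h1 : (ej (ej.symm z) : (T ⟶ SD.S.obj (⨁ fun _ : Fin n => T))) = ↑z := by
        rw [ej.apply_symm_apply]
      rwa [LinearEquiv.ofInjective_apply] at h1
    exact hz ⟨a ≫ SD.S.map w, hrange a⟩
  refine ⟨homMod 𝒯 T (SD.S.obj C), ⟨SD.S.obj C, ⟨Iso.refl _⟩⟩, ModuleCat.ofHom f0, ?_⟩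
  intro B hB g
  obtain ⟨X, ⟨eB⟩⟩ := hB
  let g' : (T ⟶ X) →ₗ[(End T)ᵐᵒᵖ] ↑M := (eB.inv ≫ g : homMod 𝒯 T X ⟶ M).hom
  let g₁ : (T ⟶ X) →ₗ[(End T)ᵐᵒᵖ] (T ⟶ SD.S.obj (⨁ fun _ : Fin n => T)) := j ∘ₗ g'
  obtain ⟨u₀, hu₀⟩ := full_n SD g₁
  have hkey : ∀ (d : (⨁ fun _ : Fin p => T) ⟶ T) (mm : ↑M),
      SD.ε (⨁ fun _ : Fin n => T) T (j mm) (SD.S.preimage v ≫ d) = 0 := by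
    intro d mm
    have h5 : j mm ≫ v = 0 := by
      have h6 : j mm ∈ LinearMap.ker q := by rw [hkerq]; exact ⟨mm, rfl⟩
      have h6' : q (j mm) = 0 := h6
      rw [← hv (j mm)]
      exact h6'
    have h7 := SD.nat_right (SD.S.preimage v) (j mm) d
    rw [← h7, hSh₁, h5, map_zero]
    rfl
  have hu₀v : u₀ ≫ v = 0 := by
    rw [← hSh₁]
    apply (SD.ε (⨁ fun _ : Fin p => T) X).injective
    rw [map_zero]
    apply LinearMap.ext; intro b
    rw [LinearMap.zero_apply, SD.nat_right (SD.S.preimage v) u₀ b]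
    have hb : SD.S.preimage v ≫ b = ∑ i, (SD.S.preimage v ≫ biproduct.π (fun _ : Fin p => T) i)
        ≫ (biproduct.ι (fun _ : Fin p => T) i ≫ b) := by
      conv_lhs => rw [hom_out_of_biproduct (T := T) b]
      rw [Preadditive.comp_sum]
      exact Finset.sum_congr rfl fun i _ => (Category.assoc _ _ _).symm
    rw [hb, map_sum]
    refine Finset.sum_eq_zero fun i _ => ?_
    rw [← SD.nat_left (biproduct.ι (fun _ : Fin p => T) i ≫ b) u₀
      (SD.S.preimage v ≫ biproduct.π (fun _ : Fin p => T) i)]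
    rw [← hu₀ (biproduct.ι (fun _ : Fin p => T) i ≫ b)]
    exact hkey (biproduct.π (fun _ : Fin p => T) i) (g' (biproduct.ι (fun _ : Fin p => T) i ≫ b))
  obtain ⟨u, hufact⟩ : ∃ u : X ⟶ SD.S.obj C, u₀ = u ≫ SD.S.map w := by
    let ι0 : SD.S.obj (SD.S.objPreimage X) ≅ X := SD.S.objObjPreimageIso X
    let ψ := SD.S.preimage (ι0.hom ≫ u₀)
    have hψ : SD.S.map ψ = ι0.hom ≫ u₀ := SD.S.map_preimage _
    have h7 : ψ ≫ SD.S.preimage v = 0 := by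
      apply SD.S.map_injective
      rw [SD.S.map_comp, hψ, Category.assoc, hSh₁, hu₀v, Limits.comp_zero, Functor.map_zero]
    obtain ⟨u', hu'⟩ := hwfact (SD.S.objPreimage X) ψ h7
    refine ⟨ι0.inv ≫ SD.S.map u', ?_⟩
    rw [Category.assoc, ← SD.S.map_comp, ← hu', hψ, ← Category.assoc, Iso.inv_hom_id,
      Category.id_comp]
  refine ⟨eB.hom ≫ ModuleCat.ofHom (postcompHom 𝒯 T u), ?_⟩
  apply ModuleCat.hom_ext
  apply LinearMap.ext; intro b
  show f0 (postcompHom 𝒯 T u (eB.hom.hom b)) = g.hom b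
  apply hj
  rw [hf0]
  have h8 : g.hom b = g' (eB.hom.hom b) := by
    show g.hom b = g.hom (eB.inv.hom (eB.hom.hom b))
    have h9 : eB.inv.hom (eB.hom.hom b) = b := by
      show (eB.hom ≫ eB.inv).hom b = b
      rw [eB.hom_inv_id]
      rfl
    rw [h9]
  rw [h8]
  have h10 : j (g' (eB.hom.hom b)) = (eB.hom.hom b) ≫ u₀ := hu₀ (eB.hom.hom b)
  rw [h10, hufact]
  show ((eB.hom.hom b : T ⟶ X) ≫ u) ≫ SD.S.map w = (eB.hom.hom b : T ⟶ X) ≫ u ≫ SD.S.map w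
  exact Category.assoc _ _ _

end RightApprox

/-- If `𝒯` has weak kernels and weak cokernels, then the essential image `𝒟` of
`𝒯(T,-)` is a functorially finite subcategory of `mod Γ`. -/
theorem ess_image_functorially_finite
    (k 𝒯 : Type) [Field k] [Category.{0} 𝒯] [Preadditive 𝒯] [CategoryTheory.Linear k 𝒯]
    [HasFiniteBiproducts 𝒯]
    (hfin : HomFinite k 𝒯) (SD : SerreData k 𝒯)
    (hwcok : ∀ {A B : 𝒯} (f : A ⟶ B), ∃ (C : 𝒯) (g : B ⟶ C), f ≫ g = 0 ∧
      ∀ (Y : 𝒯) (h : B ⟶ Y), f ≫ h = 0 → ∃ u : C ⟶ Y, h = g ≫ u)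
    (hwker : ∀ {A B : 𝒯} (f : A ⟶ B), ∃ (C : 𝒯) (g : C ⟶ A), g ≫ f = 0 ∧
      ∀ (Y : 𝒯) (h : Y ⟶ A), h ≫ f = 0 → ∃ u : Y ⟶ C, h = u ≫ g)
    (T : 𝒯) :
    ∀ M : ModuleCat (End T)ᵐᵒᵖ, Module.Finite (End T)ᵐᵒᵖ M →
      (∃ A ∈ EssIm 𝒯 T, ∃ f : M ⟶ A,
        ∀ B ∈ EssIm 𝒯 T, ∀ g : M ⟶ B, ∃ h : A ⟶ B, f ≫ h = g) ∧
      (∃ A ∈ EssIm 𝒯 T, ∃ f : A ⟶ M,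
        ∀ B ∈ EssIm 𝒯 T, ∀ g : B ⟶ M, ∃ h : B ⟶ A, h ≫ f = g) := by
  intro M hM
  exact ⟨left_approx hfin hwcok M hM, right_approx hfin SD hwker M hM⟩
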